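/- Under the Arnoldi identity (A+ΔA)Q_{1:p−1} = Q_{1:p}H with Q_{1:p} of full column rank, the GMRES solution u = Q_{1:p−1} argmin_z ‖Hz − Re‖ satisfies the quasi-optimality bound ‖(A+ΔA)u − b‖ ≤ cond(Q_{1:p}) · min_{v ∈ range(Q_{1:p−1})} ‖(A+ΔA)v − b‖, where b = Q_{1:p} Re. -/

import Mathlib

open Matrix

/-- Euclidean (ℓ₂) norm of a vector. -/
noncomputable def l2enorm {n : ℕ} (v : Fin n → ℝ) : ℝ := Real.sqrt (v ⬝ᵥ v)

/-- Smallest singular value: infimum of ‖A x‖ over unit vectors x. -/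
noncomputable def smin {k m : ℕ} (A : Matrix (Fin k) (Fin m) ℝ) : ℝ :=
  sInf ((fun x => l2enorm (A.mulVec x)) '' {x | l2enorm x = 1})

/-- Largest singular value (spectral norm): supremum of ‖A x‖ over unit vectors x. -/
noncomputable def smax {k m : ℕ} (A : Matrix (Fin k) (Fin m) ℝ) : ℝ :=
  sSup ((fun x => l2enorm (A.mulVec x)) '' {x | l2enorm x = 1})

/-- Frobenius norm. -/
noncomputable def frob {k m : ℕ} (A : Matrix (Fin k) (Fin m) ℝ) : ℝ :=
  Real.sqrt (∑ i, ∑ j, (A i j) ^ 2)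

noncomputable def toE {k : ℕ} (v : Fin k → ℝ) : EuclideanSpace ℝ (Fin k) := (WithLp.equiv 2 _).symm v

lemma l2enorm_eq {k : ℕ} (v : Fin k → ℝ) : l2enorm v = ‖toE v‖ := by
  simp [l2enorm, toE, EuclideanSpace.norm_eq, dotProduct, Real.norm_eq_abs, sq_abs, pow_two]

lemma l2enorm_nonneg {k : ℕ} (v : Fin k → ℝ) : 0 ≤ l2enorm v := Real.sqrt_nonneg _

lemma l2enorm_smul {k : ℕ} (c : ℝ) (v : Fin k → ℝ) : l2enorm (c • v) = |c| * l2enorm v := by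
  rw [l2enorm_eq, l2enorm_eq]
  have : toE (c • v) = c • toE v := rfl
  rw [this, norm_smul, Real.norm_eq_abs]

lemma bddBelow_im {k m : ℕ} (A : Matrix (Fin k) (Fin m) ℝ) :
    BddBelow ((fun x => l2enorm (A.mulVec x)) '' {x | l2enorm x = 1}) := by
  refine ⟨0, ?_⟩
  rintro y ⟨x, -, rfl⟩
  exact l2enorm_nonneg _

noncomputable def clm {k m : ℕ} (A : Matrix (Fin k) (Fin m) ℝ) :
    EuclideanSpace ℝ (Fin m) →L[ℝ] EuclideanSpace ℝ (Fin k) :=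
  LinearMap.toContinuousLinearMap (Matrix.toEuclideanLin A)

lemma clm_apply {k m : ℕ} (A : Matrix (Fin k) (Fin m) ℝ) (x : Fin m → ℝ) :
    clm A (toE x) = toE (A.mulVec x) := by
  simp [clm, toE, Matrix.toEuclideanLin_apply]

lemma bddAbove_im {k m : ℕ} (A : Matrix (Fin k) (Fin m) ℝ) :
    BddAbove ((fun x => l2enorm (A.mulVec x)) '' {x | l2enorm x = 1}) := by
  refine ⟨‖clm A‖, ?_⟩
  rintro y ⟨x, hx, rfl⟩
  have : l2enorm (A.mulVec x) = ‖clm A (toE x)‖ := by rw [clm_apply, l2enorm_eq]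
  show l2enorm (A.mulVec x) ≤ _
  rw [this]
  calc ‖clm A (toE x)‖ ≤ ‖clm A‖ * ‖toE x‖ := (clm A).le_opNorm _
    _ = ‖clm A‖ := by rw [← l2enorm_eq, hx, mul_one]

lemma smin_mul_le {k m : ℕ} (A : Matrix (Fin k) (Fin m) ℝ) (x : Fin m → ℝ) :
    smin A * l2enorm x ≤ l2enorm (A.mulVec x) := by
  rcases eq_or_ne (l2enorm x) 0 with h | h
  · rw [h, mul_zero]; exact l2enorm_nonneg _
  · have hpos : 0 < l2enorm x := lt_of_le_of_ne (l2enorm_nonneg x) (Ne.symm h)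
    set c := (l2enorm x)⁻¹ with hc
    have hcx : l2enorm (c • x) = 1 := by
      rw [l2enorm_smul, abs_of_pos (inv_pos.2 hpos), inv_mul_cancel₀ h]
    have hmem : l2enorm (A.mulVec (c • x)) ∈ (fun x => l2enorm (A.mulVec x)) '' {x | l2enorm x = 1} :=
      ⟨c • x, hcx, rfl⟩
    have h1 : smin A ≤ l2enorm (A.mulVec (c • x)) := csInf_le (bddBelow_im A) hmem
    have h2 : l2enorm (A.mulVec (c • x)) = c * l2enorm (A.mulVec x) := by
      rw [Matrix.mulVec_smul, l2enorm_smul, abs_of_pos (inv_pos.2 hpos)]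
    rw [h2] at h1
    calc smin A * l2enorm x ≤ (c * l2enorm (A.mulVec x)) * l2enorm x :=
          mul_le_mul_of_nonneg_right h1 (le_of_lt hpos)
      _ = l2enorm (A.mulVec x) := by rw [hc, mul_right_comm, inv_mul_cancel₀ h, one_mul]

lemma le_smax_mul {k m : ℕ} (A : Matrix (Fin k) (Fin m) ℝ) (x : Fin m → ℝ) :
    l2enorm (A.mulVec x) ≤ smax A * l2enorm x := by
  rcases eq_or_ne (l2enorm x) 0 with h | h
  · have hx0 : x = 0 := by
      have := l2enorm_eq x
      rw [h] at this
      have : toE x = 0 := by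
        have h2 : ‖toE x‖ = 0 := this.symm
        exact norm_eq_zero.mp h2
      simpa [toE] using congrArg (WithLp.equiv 2 _) this
    simp [hx0, Matrix.mulVec_zero, h, l2enorm, dotProduct]
  · have hpos : 0 < l2enorm x := lt_of_le_of_ne (l2enorm_nonneg x) (Ne.symm h)
    set c := (l2enorm x)⁻¹ with hc
    have hcx : l2enorm (c • x) = 1 := by
      rw [l2enorm_smul, abs_of_pos (inv_pos.2 hpos), inv_mul_cancel₀ h]
    have hmem : l2enorm (A.mulVec (c • x)) ∈ (fun x => l2enorm (A.mulVec x)) '' {x | l2enorm x = 1} :=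
      ⟨c • x, hcx, rfl⟩
    have h1 : l2enorm (A.mulVec (c • x)) ≤ smax A := le_csSup (bddAbove_im A) hmem
    have h2 : l2enorm (A.mulVec (c • x)) = c * l2enorm (A.mulVec x) := by
      rw [Matrix.mulVec_smul, l2enorm_smul, abs_of_pos (inv_pos.2 hpos)]
    rw [h2] at h1
    calc l2enorm (A.mulVec x) = (c * l2enorm (A.mulVec x)) * l2enorm x := by rw [hc, mul_right_comm, inv_mul_cancel₀ h, one_mul]
      _ ≤ smax A * l2enorm x := mul_le_mul_of_nonneg_right h1 (le_of_lt hpos)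

lemma smin_pos {k m : ℕ} (A : Matrix (Fin k) (Fin m) ℝ) (hm : 0 < m)
    (hinj : Function.Injective A.mulVec) : 0 < smin A := by
  -- the unit sphere in EuclideanSpace is compact and nonempty
  set S : Set (EuclideanSpace ℝ (Fin m)) := Metric.sphere 0 1 with hS
  have hcomp : IsCompact S := isCompact_sphere 0 1
  have hex : ∃ x : Fin m → ℝ, l2enorm x = 1 := by
    refine ⟨fun j => if j = ⟨0, hm⟩ then 1 else 0, ?_⟩
    simp [l2enorm, dotProduct, Finset.sum_ite_eq', ite_mul]
  obtain ⟨x1, hx1⟩ := hex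
  have hne : S.Nonempty := ⟨toE x1, by rw [hS, mem_sphere_zero_iff_norm, ← l2enorm_eq, hx1]⟩
  have hcont : ContinuousOn (fun y => ‖clm A y‖) S :=
    (continuous_norm.comp (clm A).continuous).continuousOn
  obtain ⟨y₀, hy₀S, hy₀min⟩ := hcomp.exists_isMinOn hne hcont
  have hy₀pos : 0 < ‖clm A y₀‖ := by
    have hy₀ne : y₀ ≠ 0 := by
      intro h0
      rw [h0] at hy₀S
      simp [hS] at hy₀S
    have : clm A y₀ ≠ 0 := by
      intro h0
      apply hy₀ne
      have h1 : A.mulVec (WithLp.equiv 2 _ y₀) = 0 := by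
        have := congrArg (WithLp.equiv 2 _) h0
        simpa [clm, Matrix.toEuclideanLin_apply] using this
      have h2 : A.mulVec (WithLp.equiv 2 _ y₀) = A.mulVec 0 := by
        rw [h1, Matrix.mulVec_zero]
      have := hinj h2
      simpa [toE] using congrArg (WithLp.equiv 2 _).symm this
    exact norm_pos_iff.2 this
  refine lt_of_lt_of_le hy₀pos ?_
  apply le_csInf
  · exact ⟨l2enorm (A.mulVec x1), x1, hx1, rfl⟩
  · rintro r ⟨x, hx, rfl⟩
    have hxS : toE x ∈ S := by rw [hS, mem_sphere_zero_iff_norm, ← l2enorm_eq, hx]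
    have := hy₀min hxS
    simp only at this
    calc ‖clm A y₀‖ ≤ ‖clm A (toE x)‖ := this
      _ = l2enorm (A.mulVec x) := by rw [clm_apply, ← l2enorm_eq]

lemma smax_nonneg {k m : ℕ} (A : Matrix (Fin k) (Fin m) ℝ) (hm : 0 < m) : 0 ≤ smax A := by
  have : ∃ x : Fin m → ℝ, l2enorm x = 1 := by
    refine ⟨fun j => if j = ⟨0, hm⟩ then 1 else 0, ?_⟩
    simp [l2enorm, dotProduct, Finset.sum_ite_eq', ite_mul]
  obtain ⟨x, hx⟩ := this
  exact le_trans (l2enorm_nonneg _) (le_csSup (bddAbove_im A) ⟨x, hx, rfl⟩)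

lemma inj_of_rank {k m : ℕ} (A : Matrix (Fin k) (Fin m) ℝ) (h : A.rank = m) :
    Function.Injective A.mulVec := by
  have hker : LinearMap.ker A.mulVecLin = ⊥ := by
    have h1 := LinearMap.finrank_range_add_finrank_ker A.mulVecLin
    rw [show Module.finrank ℝ (LinearMap.range A.mulVecLin) = A.rank from rfl, h] at h1
    have h2 : Module.finrank ℝ (Fin m → ℝ) = m := by simp
    rw [h2] at h1
    have h3 : Module.finrank ℝ (LinearMap.ker A.mulVecLin) = 0 := by omega
    exact Submodule.finrank_eq_zero.mp h3
  have := LinearMap.ker_eq_bot.mp hker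
  intro x y hxy
  exact this (by simpa [Matrix.mulVecLin] using hxy)

lemma l2enorm_zero {k : ℕ} : l2enorm (0 : Fin k → ℝ) = 0 := by simp [l2enorm, dotProduct]

/-- Quasi-optimality of the randomized GMRES solution. -/
theorem randomized_gmres_quasi_optimality {n m₁ m₂ : ℕ}
    (A ΔA : Matrix (Fin n) (Fin n) ℝ)
    (Q : Matrix (Fin n) (Fin (m₁ + m₂)) ℝ) (H : Matrix (Fin (m₁ + m₂)) (Fin m₁) ℝ)
    (hrank : Q.rank = m₁ + m₂)
    (harnoldi : (A + ΔA) * Q.submatrix id (Fin.castAdd m₂) = Q * H)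
    (Re : Fin (m₁ + m₂) → ℝ) (b : Fin n → ℝ) (hb : b = Q.mulVec Re)
    (z₀ : Fin m₁ → ℝ)
    (hz₀ : ∀ z : Fin m₁ → ℝ, l2enorm (H.mulVec z₀ - Re) ≤ l2enorm (H.mulVec z - Re))
    (u : Fin n → ℝ) (hu : u = (Q.submatrix id (Fin.castAdd m₂)).mulVec z₀) :
    ∀ z : Fin m₁ → ℝ,
      l2enorm ((A + ΔA).mulVec u - b)
        ≤ (smax Q / smin Q) *
          l2enorm ((A + ΔA).mulVec ((Q.submatrix id (Fin.castAdd m₂)).mulVec z) - b) := by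

  intro z
  set Q1 := Q.submatrix id (Fin.castAdd m₂) with hQ1
  have key : ∀ w : Fin m₁ → ℝ,
      (A + ΔA).mulVec (Q1.mulVec w) - b = Q.mulVec (H.mulVec w - Re) := by
    intro w
    rw [hb, Matrix.mulVec_mulVec, harnoldi, ← Matrix.mulVec_mulVec, ← Matrix.mulVec_sub]
  by_cases hm : 0 < m₁ + m₂
  · have hinj := inj_of_rank Q hrank
    have hsp := smin_pos Q hm hinj
    have hsx := smax_nonneg Q hm
    rw [hu, key z₀, key z]
    calc l2enorm (Q.mulVec (H.mulVec z₀ - Re))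
        ≤ smax Q * l2enorm (H.mulVec z₀ - Re) := le_smax_mul Q _
      _ ≤ smax Q * l2enorm (H.mulVec z - Re) := mul_le_mul_of_nonneg_left (hz₀ z) hsx
      _ ≤ smax Q * (l2enorm (Q.mulVec (H.mulVec z - Re)) / smin Q) := by
          apply mul_le_mul_of_nonneg_left _ hsx
          rw [le_div_iff₀ hsp, mul_comm]
          exact smin_mul_le Q _
      _ = (smax Q / smin Q) * l2enorm (Q.mulVec (H.mulVec z - Re)) := by ring
  · have hm0 : m₁ + m₂ = 0 := by omega
    have hm1 : m₁ = 0 := by omega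
    have hall : ∀ v w : Fin m₁ → ℝ, v = w := fun v w =>
      funext fun i => (Fin.cast hm1 i).elim0
    have hz : H.mulVec z - Re = 0 := funext fun i => (Fin.cast hm0 i).elim0
    have hz0 : H.mulVec z₀ - Re = 0 := funext fun i => (Fin.cast hm0 i).elim0
    rw [hu, key z₀, key z, hz, hz0, Matrix.mulVec_zero, l2enorm_zero, mul_zero]
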